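/- Let K be a field equipped with a nonarchimedean absolute value |·| : K → ℝ, and let γ be a real number with 0 < γ < 1. Then for all x, y ∈ K, the set {x·g + y·h : g, h ∈ K, |g − 1| ≤ γ, |h − 1| ≤ γ} is exactly the closed ball {z ∈ K : |z − (x + y)| ≤ γ·max(|x|, |y|)}. -/

import Mathlib

theorem stmt4 (K : Type) [Field K] (v : K → ℝ)
    (hnn : ∀ x : K, 0 ≤ v x) (hzero : ∀ x : K, v x = 0 ↔ x = 0)
    (hmul : ∀ x y : K, v (x * y) = v x * v y)
    (hna : ∀ x y : K, v (x + y) ≤ max (v x) (v y))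
    (γ : ℝ) (hγ0 : 0 < γ) (hγ1 : γ < 1) (x y : K) :
    {z : K | ∃ g h : K, v (g - 1) ≤ γ ∧ v (h - 1) ≤ γ ∧ z = x * g + y * h} =
      {z : K | v (z - (x + y)) ≤ γ * max (v x) (v y)} := by
  have hv1 : v 1 = 1 := by
    have h := hmul 1 1
    rw [one_mul] at h
    have h1 : v 1 ≠ 0 := fun h0 => one_ne_zero ((hzero 1).mp h0)
    exact (mul_left_cancel₀ h1 (by rw [mul_one, ← h])).symm
  have hvinv : ∀ a : K, a ≠ 0 → v a⁻¹ = (v a)⁻¹ := by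
    intro a ha
    exact eq_inv_of_mul_eq_one_right (by rw [← hmul, mul_inv_cancel₀ ha, hv1])
  ext z
  simp only [Set.mem_setOf_eq]
  constructor
  · rintro ⟨g, h, hg, hh, rfl⟩
    have heq : x * g + y * h - (x + y) = x * (g - 1) + y * (h - 1) := by ring
    rw [heq]
    refine le_trans (hna _ _) (max_le ?_ ?_)
    · rw [hmul]
      calc v x * v (g - 1) ≤ v x * γ := mul_le_mul_of_nonneg_left hg (hnn x)
        _ ≤ γ * max (v x) (v y) := by rw [mul_comm]; exact mul_le_mul_of_nonneg_left (le_max_left _ _) hγ0.le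
    · rw [hmul]
      calc v y * v (h - 1) ≤ v y * γ := mul_le_mul_of_nonneg_left hh (hnn y)
        _ ≤ γ * max (v x) (v y) := by rw [mul_comm]; exact mul_le_mul_of_nonneg_left (le_max_right _ _) hγ0.le
  · intro hz
    rcases le_total (v y) (v x) with hxy | hxy
    · by_cases hx : x = 0
      · have hvx : v x = 0 := (hzero x).mpr hx
        have hvy : v y = 0 := le_antisymm (hvx ▸ hxy) (hnn y)
        have hy : y = 0 := (hzero y).mp hvy
        have : v (z - (x + y)) = 0 := by
          apply le_antisymm _ (hnn _)
          calc v (z - (x + y)) ≤ γ * max (v x) (v y) := hz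
            _ = 0 := by rw [hvx, hvy]; simp
        have hzxy : z = x + y := sub_eq_zero.mp ((hzero _).mp this)
        exact ⟨1, 1, by simp [hv1, (hzero (0:K)).mpr rfl, hγ0.le], by
          simp [(hzero (0:K)).mpr rfl, hγ0.le], by simp [hzxy]⟩
      · refine ⟨1 + (z - (x + y)) / x, 1, ?_, ?_, ?_⟩
        · have : (1 + (z - (x + y)) / x - 1) = (z - (x + y)) * x⁻¹ := by
            field_simp
            ring
          rw [this, hmul, hvinv x hx]
          have hvx : 0 < v x := lt_of_le_of_ne (hnn x)
            (fun h0 => hx ((hzero x).mp h0.symm))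
          rw [max_eq_left hxy] at hz
          rw [mul_inv_le_iff₀ hvx, mul_comm]
          linarith
        · simp [(hzero (0:K)).mpr rfl, hγ0.le]
        · field_simp
          ring
    · by_cases hy : y = 0
      · have hvy : v y = 0 := (hzero y).mpr hy
        have hvx : v x = 0 := le_antisymm (hvy ▸ hxy) (hnn x)
        have hx : x = 0 := (hzero x).mp hvx
        have : v (z - (x + y)) = 0 := by
          apply le_antisymm _ (hnn _)
          calc v (z - (x + y)) ≤ γ * max (v x) (v y) := hz
            _ = 0 := by rw [hvx, hvy]; simp
        have hzxy : z = x + y := sub_eq_zero.mp ((hzero _).mp this)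
        exact ⟨1, 1, by simp [(hzero (0:K)).mpr rfl, hγ0.le], by
          simp [(hzero (0:K)).mpr rfl, hγ0.le], by simp [hzxy]⟩
      · refine ⟨1, 1 + (z - (x + y)) / y, ?_, ?_, ?_⟩
        · simp [(hzero (0:K)).mpr rfl, hγ0.le]
        · have : (1 + (z - (x + y)) / y - 1) = (z - (x + y)) * y⁻¹ := by
            field_simp
            ring
          rw [this, hmul, hvinv y hy]
          have hvy : 0 < v y := lt_of_le_of_ne (hnn y)
            (fun h0 => hy ((hzero y).mp h0.symm))
          rw [max_eq_right hxy] at hz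
          rw [mul_inv_le_iff₀ hvy, mul_comm]
          linarith
        · field_simp
          ring
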